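/- Let G be a compact topological group acting continuously by linear automorphisms on a finite-dimensional real vector space V. If v, w ∈ V satisfy P(v) = P(w) for every polynomial function P : V → ℝ that is invariant under the G-action (i.e. P(g·u) = P(u) for all g ∈ G and u ∈ V), then w lies in the G-orbit of v, i.e. there exists g ∈ G with w = g·v. -/

import Mathlib

open MvPolynomial

section AuxPoly

lemma aux_totalDegree {n : ℕ} (c : Fin n → Fin n → ℝ) (p : MvPolynomial (Fin n) ℝ) :
    (aeval (fun i => ∑ j, C (c i j) * X j) p).totalDegree ≤ p.totalDegree := by
  conv_lhs => rw [p.as_sum]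
  rw [map_sum]
  refine (totalDegree_finset_sum _ _).trans (Finset.sup_le fun m hm => ?_)
  rw [aeval_monomial]
  refine (totalDegree_mul _ _).trans ?_
  rw [MvPolynomial.algebraMap_eq, totalDegree_C, zero_add, Finsupp.prod]
  refine (totalDegree_finset_prod _ _).trans ?_
  refine le_trans (Finset.sum_le_sum (g := fun i => m i * 1) (fun i _ => ?_)) ?_
  · exact (totalDegree_pow _ _).trans
      (Nat.mul_le_mul_left _ ((totalDegree_finset_sum _ _).trans (Finset.sup_le fun j _ =>
        (totalDegree_mul _ _).trans (by simp [totalDegree_C, totalDegree_X]))))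
  · calc ∑ i ∈ m.support, m i * 1 = m.sum fun _ e => e := by simp [Finsupp.sum]
      _ ≤ p.totalDegree := le_totalDegree hm

variable {V : Type*} [AddCommGroup V] [Module ℝ V]

lemma aux_adjoin_eq {n : ℕ} (b : Module.Basis (Fin n) ℝ V) :
    Algebra.adjoin ℝ {f : V → ℝ | IsLinearMap ℝ f}
      = (MvPolynomial.aeval (fun i => ⇑(b.coord i)) :
          MvPolynomial (Fin n) ℝ →ₐ[ℝ] (V → ℝ)).range := by
  rw [← Algebra.adjoin_range_eq_range_aeval]
  apply le_antisymm
  · apply Algebra.adjoin_le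
    intro f hf
    have hf' : f = ∑ i : Fin n, f (b i) • ⇑(b.coord i) := by
      funext u
      rw [Finset.sum_apply]
      simp only [Pi.smul_apply, smul_eq_mul, Module.Basis.coord_apply]
      have h1 : f u = f (∑ i, b.repr u i • b i) := by rw [Module.Basis.sum_repr]
      have h2 := map_sum (IsLinearMap.mk' f hf) (fun i => b.repr u i • b i) Finset.univ
      simp only [IsLinearMap.mk'_apply] at h2
      rw [h1, h2]
      refine Finset.sum_congr rfl fun i _ => ?_
      rw [hf.map_smul]
      simp [mul_comm]
    rw [hf']
    exact Subalgebra.sum_mem _ fun i _ =>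
      Subalgebra.smul_mem _ (Algebra.subset_adjoin (Set.mem_range_self i)) _
  · apply Algebra.adjoin_le
    rintro _ ⟨i, rfl⟩
    exact Algebra.subset_adjoin (b.coord i).isLinear

lemma aux_comp_mem {n : ℕ} (b : Module.Basis (Fin n) ℝ V) (p : MvPolynomial (Fin n) ℝ)
    (T : V →ₗ[ℝ] V) :
    (fun u => (aeval (fun i => ⇑(b.coord i)) p : V → ℝ) (T u)) ∈
      Submodule.map
        (MvPolynomial.aeval (fun i => ⇑(b.coord i)) :
          MvPolynomial (Fin n) ℝ →ₐ[ℝ] (V → ℝ)).toLinearMap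
        (restrictTotalDegree (Fin n) ℝ p.totalDegree) := by
  refine ⟨aeval (fun i => ∑ j, C (b.coord i (T (b j))) * X j) p,
    (mem_restrictTotalDegree _ _ _).mpr (aux_totalDegree _ p), ?_⟩
  show (aeval (fun i => ⇑(b.coord i))) ((aeval (fun i => ∑ j, C (b.coord i (T (b j))) * X j)) p) = _
  funext u
  have hev : ∀ (r : MvPolynomial (Fin n) ℝ) (x : V),
      (aeval (fun i => ⇑(b.coord i)) r : V → ℝ) x = aeval (fun i => b.coord i x) r := by
    intro r x
    have := comp_aeval_apply (R := ℝ) (f := fun i => ⇑(b.coord i))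
      (φ := Pi.evalAlgHom ℝ (fun _ : V => ℝ) x) r
    simpa using this
  rw [hev, hev, comp_aeval_apply]
  have hpt : (fun i => aeval (fun i' => b.coord i' u) (∑ j, C (b.coord i (T (b j))) * X j))
      = fun i => b.coord i (T u) := by
    funext i
    simp only [map_sum, map_mul, aeval_C, aeval_X, algebraMap_eq]
    have h1 : b.coord i (T u) = ∑ j, b.coord i (T (b j)) * b.coord j u := by
      have h2 : T u = ∑ j, b.repr u j • T (b j) := by
        conv_lhs => rw [← Module.Basis.sum_repr b u]
        rw [map_sum]
        simp [map_smul]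
      rw [h2, map_sum]
      simp only [map_smul, smul_eq_mul, Module.Basis.coord_apply]
      exact Finset.sum_congr rfl fun j _ => mul_comm _ _
    rw [h1]
    simp
  rw [hpt]

lemma aux_span_eval {W : Type*} (N : Submodule ℝ (W → ℝ)) [FiniteDimensional ℝ N] :
    Submodule.span ℝ (Set.range fun u : W =>
      ((LinearMap.proj u).comp N.subtype : Module.Dual ℝ N)) = ⊤ := by
  rw [← Subspace.dualAnnihilator_inj, Submodule.dualAnnihilator_top]
  rw [eq_bot_iff]
  intro ξ hξ
  rw [Submodule.mem_bot]
  obtain ⟨f, rfl⟩ := (Module.evalEquiv ℝ N).surjective ξ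
  rw [Submodule.mem_dualAnnihilator] at hξ
  have hf : ∀ u : W, (f : W → ℝ) u = 0 := by
    intro u
    have := hξ _ (Submodule.subset_span (Set.mem_range_self u))
    simpa [Module.evalEquiv, Module.Dual.eval] using this
  have : f = 0 := Subtype.ext (funext hf)
  rw [this, map_zero]

end AuxPoly

/-- **Polynomial invariants of a compact group separate orbits of a real representation.**
If a compact topological group `G` acts continuously by linear automorphisms on a
finite-dimensional real vector space `V`, and `v, w ∈ V` agree on every `G`-invariant
polynomial function (an element of the algebra generated by linear functionals),
then `w` lies in the `G`-orbit of `v`. -/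
theorem polynomial_invariants_separate_orbits_real
    {G V : Type*} [Group G] [TopologicalSpace G] [IsTopologicalGroup G] [CompactSpace G]
    [NormedAddCommGroup V] [NormedSpace ℝ V] [FiniteDimensional ℝ V]
    (ρ : G →* (V ≃ₗ[ℝ] V))
    (hcont : Continuous fun p : G × V => ρ p.1 p.2)
    (v w : V)
    (hsep : ∀ P : V → ℝ, P ∈ Algebra.adjoin ℝ {f : V → ℝ | IsLinearMap ℝ f} →
      (∀ (g : G) (u : V), P (ρ g u) = P u) → P v = P w) :
    ∃ g : G, (ρ g) v = w := by
  classical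
  by_contra hc
  push_neg at hc
  set n := Module.finrank ℝ V with hn
  let b : Module.Basis (Fin n) ℝ V := Module.finBasis ℝ V
  have hact : ∀ u : V, Continuous fun g : G => ρ g u :=
    fun u => hcont.comp (continuous_id.prodMk continuous_const)
  have hmul : ∀ (g h : G) (u : V), ρ g (ρ h u) = ρ (g * h) u := by
    intro g h u
    rw [map_mul]
    rfl
  -- orbits are compact and disjoint
  have hOv : IsCompact (Set.range fun g : G => ρ g v) := isCompact_range (hact v)
  have hOw : IsCompact (Set.range fun g : G => ρ g w) := isCompact_range (hact w)
  have hdisj : Disjoint (Set.range fun g : G => ρ g v) (Set.range fun g : G => ρ g w) := by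
    rw [Set.disjoint_left]
    rintro x ⟨g, rfl⟩ ⟨h, hh⟩
    refine hc (h⁻¹ * g) ?_
    have hh' : ρ h w = ρ g v := hh
    rw [← hmul h⁻¹ g v, ← hh', hmul, inv_mul_cancel, map_one]
    rfl
  -- Urysohn separation
  obtain ⟨fU, hfU0, hfU1, hfU01⟩ :=
    exists_continuous_zero_one_of_isClosed hOv.isClosed hOw.isClosed hdisj
  set K : Set V := (Set.range fun g : G => ρ g v) ∪ (Set.range fun g : G => ρ g w) with hK
  have hKc : IsCompact K := hOv.union hOw
  haveI : CompactSpace K := isCompact_iff_compactSpace.mp hKc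
  -- Stone-Weierstrass approximation
  let cmap : Fin n → C(V, ℝ) := fun i =>
    ⟨⇑(b.coord i), (b.coord i).continuous_of_finiteDimensional⟩
  let resK : C(V, ℝ) →ₐ[ℝ] C(K, ℝ) :=
    ContinuousMap.compRightAlgHom ℝ ℝ ⟨Subtype.val, continuous_subtype_val⟩
  let SA : Subalgebra ℝ C(V, ℝ) := Algebra.adjoin ℝ (Set.range cmap)
  have hsepPts : (SA.map resK).SeparatesPoints := by
    rintro x y hxy
    have hxy' : (x : V) ≠ y := fun h => hxy (Subtype.ext h)
    have hrxy : b.repr (x : V) ≠ b.repr (y : V) := fun h => hxy' (b.repr.injective h)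
    have hex : ∃ i, b.repr (x : V) i ≠ b.repr (y : V) i := by
      by_contra hno
      push_neg at hno
      exact hrxy (DFunLike.ext _ _ hno)
    obtain ⟨i, hi⟩ := hex
    refine ⟨⇑(resK (cmap i)),
      ⟨resK (cmap i), ⟨cmap i, Algebra.subset_adjoin (Set.mem_range_self i), rfl⟩, rfl⟩, ?_⟩
    simpa [resK, cmap] using hi
  obtain ⟨Qr, hQr⟩ := ContinuousMap.exists_mem_subalgebra_near_continuousMap_of_separatesPoints
    (SA.map resK) hsepPts (resK fU) (1/3) (by norm_num)
  obtain ⟨Qc, hQcSA, hQcr⟩ := Subalgebra.mem_map.mp Qr.2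
  set Q : V → ℝ := ⇑Qc with hQdef
  -- Q is a polynomial function
  have hQA : Q ∈ (MvPolynomial.aeval (fun i => ⇑(b.coord i)) :
      MvPolynomial (Fin n) ℝ →ₐ[ℝ] (V → ℝ)).range := by
    rw [← Algebra.adjoin_range_eq_range_aeval]
    have hmem : Q ∈ SA.map (ContinuousMap.coeFnAlgHom ℝ : C(V, ℝ) →ₐ[ℝ] (V → ℝ)) :=
      ⟨Qc, hQcSA, rfl⟩
    rw [AlgHom.map_adjoin] at hmem
    have himg : (ContinuousMap.coeFnAlgHom ℝ : C(V, ℝ) →ₐ[ℝ] (V → ℝ)) '' Set.range cmap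
        = Set.range fun i => ⇑(b.coord i) := by
      rw [← Set.range_comp]
      rfl
    rwa [himg] at hmem
  obtain ⟨p, hp0⟩ := hQA
  have hp : (MvPolynomial.aeval (fun i => ⇑(b.coord i)) :
      MvPolynomial (Fin n) ℝ →ₐ[ℝ] (V → ℝ)) p = Q := hp0
  set Nsub : Submodule ℝ (V → ℝ) := Submodule.map
    (MvPolynomial.aeval (fun i => ⇑(b.coord i)) :
      MvPolynomial (Fin n) ℝ →ₐ[ℝ] (V → ℝ)).toLinearMap
    (restrictTotalDegree (Fin n) ℝ p.totalDegree) with hNsub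
  haveI : FiniteDimensional ℝ Nsub := Module.Finite.map _ _
  have hmemN : ∀ g : G, (fun u => Q (ρ g⁻¹ u)) ∈ Nsub := by
    intro g
    have h1 := aux_comp_mem b p (ρ g⁻¹ : V ≃ₗ[ℝ] V).toLinearMap
    rw [hp] at h1
    exact h1
  -- Haar measure
  letI : MeasurableSpace G := borel G
  haveI : BorelSpace G := ⟨rfl⟩
  haveI : Nonempty G := ⟨1⟩
  let K₀ : TopologicalSpace.PositiveCompacts G :=
    ⟨⟨Set.univ, isCompact_univ⟩, by rw [interior_univ]; exact Set.univ_nonempty⟩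
  set μ := MeasureTheory.Measure.haarMeasure K₀ with hμ
  have hIntC : ∀ F : G → ℝ, Continuous F → MeasureTheory.Integrable F μ := fun F hF =>
    hF.integrable_of_hasCompactSupport (HasCompactSupport.of_compactSpace F)
  set P : V → ℝ := fun u => ∫ g, Q (ρ g⁻¹ u) ∂μ with hP
  -- the averaged function is polynomial
  let e : Module.Basis (Fin (Module.finrank ℝ Nsub)) ℝ Nsub := Module.finBasis ℝ Nsub
  let nG : G → Nsub := fun g => ⟨fun u => Q (ρ g⁻¹ u), hmemN g⟩
  have hkey : ∀ (u : V) (g : G),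
      Q (ρ g⁻¹ u) = ∑ i, e.repr (nG g) i * ((e i : Nsub) : V → ℝ) u := by
    intro u g
    have h1 : ((nG g : Nsub) : V → ℝ) u = Q (ρ g⁻¹ u) := rfl
    rw [← h1, ← e.sum_repr (nG g)]
    simp [Finset.sum_apply]
    conv_lhs => rw [← e.sum_repr (nG g)]
    simp only [Submodule.coe_sum, Finset.sum_apply, Submodule.coe_smul, Pi.smul_apply, smul_eq_mul]
  have hcoordrep : ∀ i, ∃ (k : ℕ) (cc : Fin k → ℝ) (us : Fin k → V),
      ∀ g : G, e.repr (nG g) i = ∑ j, cc j * Q (ρ g⁻¹ (us j)) := by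
    intro i
    have hsp : (e.coord i : Module.Dual ℝ Nsub) ∈ Submodule.span ℝ
        (Set.range fun u : V => ((LinearMap.proj u).comp Nsub.subtype : Module.Dual ℝ Nsub)) := by
      rw [aux_span_eval Nsub]
      trivial
    obtain ⟨k, cc, φs, hφ⟩ := Submodule.mem_span_set'.mp hsp
    choose us hus using fun j : Fin k => (φs j).2
    refine ⟨k, cc, us, fun g => ?_⟩
    have h2 := congrArg (fun L : Module.Dual ℝ Nsub => L (nG g)) hφ
    simp only [LinearMap.coe_sum, Finset.sum_apply, LinearMap.smul_apply, smul_eq_mul] at h2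
    rw [Module.Basis.coord_apply] at h2
    rw [← h2]
    refine Finset.sum_congr rfl fun j _ => ?_
    congr 1
    rw [← hus j]
    rfl
  have hQcont : Continuous Q := Qc.continuous
  have hcont2 : ∀ i, Continuous fun g : G => e.repr (nG g) i := by
    intro i
    obtain ⟨k, cc, us, hrep⟩ := hcoordrep i
    have : (fun g : G => e.repr (nG g) i)
        = fun g => ∑ j, cc j * Q (ρ g⁻¹ (us j)) := funext hrep
    rw [this]
    exact continuous_finset_sum _ fun j _ =>
      continuous_const.mul (hQcont.comp ((hact (us j)).comp continuous_inv))
  have hPsum : ∀ u : V,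
      P u = ∑ i, (∫ g, e.repr (nG g) i ∂μ) * ((e i : Nsub) : V → ℝ) u := by
    intro u
    have h1 : P u = ∫ g, ∑ i, e.repr (nG g) i * ((e i : Nsub) : V → ℝ) u ∂μ := by
      simp only [hP]
      congr 1
      funext g
      exact hkey u g
    rw [h1, MeasureTheory.integral_finset_sum]
    · exact Finset.sum_congr rfl fun i _ => MeasureTheory.integral_mul_const _ _
    · exact fun i _ => hIntC _ ((hcont2 i).mul continuous_const)
  have hPE : P = ((∑ i, (∫ g, e.repr (nG g) i ∂μ) • e i : Nsub) : V → ℝ) := by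
    funext u
    rw [hPsum u]
    simp [Finset.sum_apply]
  have hPmemA : P ∈ Algebra.adjoin ℝ {f : V → ℝ | IsLinearMap ℝ f} := by
    rw [aux_adjoin_eq b]
    obtain ⟨q, _, hqe⟩ := (∑ i, (∫ g, e.repr (nG g) i ∂μ) • e i : Nsub).2
    exact ⟨q, by rw [← hPE] at hqe; exact hqe⟩
  -- invariance
  have hPinv : ∀ (g₀ : G) (u : V), P (ρ g₀ u) = P u := by
    intro g₀ u
    have h1 : ∀ g : G, Q (ρ g⁻¹ (ρ g₀ u)) = Q (ρ (g₀⁻¹ * g)⁻¹ u) := by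
      intro g
      rw [hmul, mul_inv_rev, inv_inv]
    calc P (ρ g₀ u) = ∫ g, Q (ρ (g₀⁻¹ * g)⁻¹ u) ∂μ := by
          simp only [hP]
          congr 1
          funext g
          exact h1 g
      _ = ∫ g, Q (ρ g⁻¹ u) ∂μ :=
          MeasureTheory.integral_mul_left_eq_self (fun x : G => Q (ρ x⁻¹ u)) g₀⁻¹
      _ = P u := rfl
  -- estimates
  have hnear : ∀ x : K, |Q (x : V) - fU (x : V)| < 1/3 := by
    intro x
    have h1 : ((Qr : C(K, ℝ)) - resK fU) x = Q (x : V) - fU (x : V) := by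
      rw [← hQcr]
      simp [resK]
      rfl
    calc |Q (x : V) - fU (x : V)| = ‖((Qr : C(K, ℝ)) - resK fU) x‖ := by
          rw [h1, Real.norm_eq_abs]
      _ ≤ ‖(Qr : C(K, ℝ)) - resK fU‖ := ContinuousMap.norm_coe_le_norm _ x
      _ < 1/3 := hQr
  have hv : ∀ g : G, Q (ρ g⁻¹ v) ≤ 1/3 := by
    intro g
    have hx : ρ g⁻¹ v ∈ K := Or.inl ⟨g⁻¹, rfl⟩
    have h2 := hnear ⟨_, hx⟩
    have h0 : fU (ρ g⁻¹ v) = 0 := hfU0 ⟨g⁻¹, rfl⟩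
    rw [h0, sub_zero] at h2
    exact (abs_lt.mp h2).2.le.trans (by norm_num)
  have hw : ∀ g : G, 2/3 ≤ Q (ρ g⁻¹ w) := by
    intro g
    have hx : ρ g⁻¹ w ∈ K := Or.inr ⟨g⁻¹, rfl⟩
    have h2 := hnear ⟨_, hx⟩
    have h0 : fU (ρ g⁻¹ w) = 1 := hfU1 ⟨g⁻¹, rfl⟩
    rw [h0] at h2
    have := (abs_lt.mp h2).1
    linarith
  have hQv : MeasureTheory.Integrable (fun g : G => Q (ρ g⁻¹ v)) μ :=
    hIntC _ (hQcont.comp ((hact v).comp continuous_inv))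
  have hQw : MeasureTheory.Integrable (fun g : G => Q (ρ g⁻¹ w)) μ :=
    hIntC _ (hQcont.comp ((hact w).comp continuous_inv))
  have huniv : μ Set.univ = 1 := MeasureTheory.Measure.haarMeasure_self
  have hPv : P v ≤ 1/3 := by
    have h3 := MeasureTheory.integral_mono hQv (MeasureTheory.integrable_const (1/3 : ℝ)) hv
    rwa [MeasureTheory.integral_const, MeasureTheory.measureReal_def, huniv, ENNReal.toReal_one, one_smul] at h3
  have hPw : (2:ℝ)/3 ≤ P w := by
    have h3 := MeasureTheory.integral_mono (MeasureTheory.integrable_const (2/3 : ℝ)) hQw hw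
    rwa [MeasureTheory.integral_const, MeasureTheory.measureReal_def, huniv, ENNReal.toReal_one, one_smul] at h3
  have : P v < P w := lt_of_le_of_lt hPv (lt_of_lt_of_le (by norm_num) hPw)
  exact absurd (hsep P hPmemA hPinv) (ne_of_lt this)
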